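/- Let y(τ) = −2·arcsin(tanh τ), f > 0, and let u : [−π, π] → ℝ be continuous. For continuous functions T_e : ℝ → ℝ and R : ℝ → ℝ, the Melnikov function M = ∫_{−∞}^{∞} y'(τ)·(T_e(u(y(τ))) − R(u(y(τ))))/f dτ vanishes if and only if ∫_{−π}^{π} T_e(u(y)) dy = ∫_{−π}^{π} R(u(y)) dy. -/

import Mathlib

open Real MeasureTheory

private lemma tanh_mem_Ioo (τ : ℝ) : Real.tanh τ ∈ Set.Ioo (-1 : ℝ) 1 := by
  rw [Real.tanh_eq_sinh_div_cosh]
  have hc := Real.cosh_pos τ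
  constructor
  · rw [lt_div_iff₀ hc]
    nlinarith [Real.exp_pos τ, Real.cosh_add_sinh τ]
  · rw [div_lt_one hc]
    nlinarith [Real.exp_pos (-τ), Real.cosh_sub_sinh τ]

private lemma one_sub_tanh_sq (τ : ℝ) :
    1 - Real.tanh τ ^ 2 = 1 / Real.cosh τ ^ 2 := by
  rw [Real.tanh_eq_sinh_div_cosh]
  have hc := (Real.cosh_pos τ).ne'
  field_simp
  exact Real.cosh_sq_sub_sinh_sq τ

private lemma hasDerivAt_tanh (τ : ℝ) :
    HasDerivAt Real.tanh (1 / Real.cosh τ ^ 2) τ := by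
  have hc := (Real.cosh_pos τ).ne'
  have h := (Real.hasDerivAt_sinh τ).div (Real.hasDerivAt_cosh τ) hc
  have h2 : Real.tanh = fun x => Real.sinh x / Real.cosh x := by
    funext x; exact Real.tanh_eq_sinh_div_cosh x
  rw [h2]
  suffices e : (1 / Real.cosh τ ^ 2) = (Real.cosh τ * Real.cosh τ - Real.sinh τ * Real.sinh τ) / Real.cosh τ ^ 2 by
    rw [e]; exact h
  have := Real.cosh_sq_sub_sinh_sq τ
  rw [show Real.cosh τ * Real.cosh τ - Real.sinh τ * Real.sinh τ = 1 by nlinarith]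

private lemma hasDerivAt_Y (τ : ℝ) :
    HasDerivAt (fun t : ℝ => -2 * Real.arcsin (Real.tanh t))
      (-2 / Real.cosh τ) τ := by
  obtain ⟨h1, h2⟩ := tanh_mem_Ioo τ
  have ha := Real.hasDerivAt_arcsin h1.ne' h2.ne
  have h := (ha.comp τ (hasDerivAt_tanh τ)).const_mul (-2 : ℝ)
  suffices e : -2 / Real.cosh τ = -2 * (1 / √(1 - Real.tanh τ ^ 2) * (1 / Real.cosh τ ^ 2)) by
    rw [e]; exact h
  have hc := Real.cosh_pos τ
  rw [one_sub_tanh_sq τ]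
  rw [show Real.sqrt (1 / Real.cosh τ ^ 2) = 1 / Real.cosh τ by
    rw [one_div, one_div, Real.sqrt_inv, Real.sqrt_sq hc.le]]
  field_simp

private lemma range_Y :
    Set.range (fun t : ℝ => -2 * Real.arcsin (Real.tanh t)) = Set.Ioo (-π) π := by
  ext s
  constructor
  · rintro ⟨τ, rfl⟩
    obtain ⟨h1, h2⟩ := tanh_mem_Ioo τ
    have ha1 : -(π/2) < Real.arcsin (Real.tanh τ) := Real.neg_pi_div_two_lt_arcsin.2 h1
    have ha2 : Real.arcsin (Real.tanh τ) < π/2 := Real.arcsin_lt_pi_div_two.2 h2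
    constructor <;> simp only [Set.mem_Ioo] <;> nlinarith
  · rintro ⟨hs1, hs2⟩
    set v := Real.sin (-(s/2)) with hv
    have hmem : -(s/2) ∈ Set.Ioo (-(π/2)) (π/2) := by
      constructor <;> [linarith; linarith]
    have hvmem : v ∈ Set.Ioo (-1 : ℝ) 1 := Real.mapsTo_sin_Ioo hmem
    have hden : (0:ℝ) < 1 - v := by linarith [hvmem.2]
    have hnum : (0:ℝ) < 1 + v := by linarith [hvmem.1]
    refine ⟨Real.log ((1 + v) / (1 - v)) / 2, ?_⟩
    set τ := Real.log ((1 + v) / (1 - v)) / 2 with hτ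
    have hA : Real.exp τ * Real.exp τ = (1 + v) / (1 - v) := by
      rw [← Real.exp_add, hτ]
      rw [show Real.log ((1+v)/(1-v)) / 2 + Real.log ((1+v)/(1-v)) / 2
            = Real.log ((1+v)/(1-v)) by ring]
      exact Real.exp_log (div_pos hnum hden)
    have hAp := Real.exp_pos τ
    have htanh : Real.tanh τ = v := by
      rw [Real.tanh_eq_sinh_div_cosh, Real.sinh_eq, Real.cosh_eq, Real.exp_neg]
      have hA2 : rexp τ + (rexp τ)⁻¹ ≠ 0 := by positivity
      have hA' : rexp τ * rexp τ * (1 - v) = 1 + v := by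
        rw [hA]; field_simp
      field_simp
      nlinarith [hA']
    show -2 * Real.arcsin (Real.tanh τ) = s
    rw [htanh, hv, Real.arcsin_sin (by linarith [hmem.1]) (by linarith [hmem.2])]
    ring

/-- The Melnikov function ∫ y'(τ)(T_e(u(y(τ))) − R(u(y(τ))))/f dτ along the
heteroclinic orbit y(τ) = −2 arcsin(tanh τ) vanishes if and only if
∫_{−π}^{π} T_e(u(y)) dy = ∫_{−π}^{π} R(u(y)) dy. -/
theorem stmt4 (y : ℝ → ℝ)
    (hy : y = fun τ : ℝ => -2 * Real.arcsin (Real.tanh τ))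
    (f : ℝ) (hf : 0 < f) (u Te R : ℝ → ℝ)
    (hu : ContinuousOn u (Set.Icc (-π) π))
    (hTe : Continuous Te) (hR : Continuous R) :
    (∫ τ : ℝ, deriv y τ * ((Te (u (y τ)) - R (u (y τ))) / f)) = 0 ↔
      (∫ s in (-π)..π, Te (u s)) = ∫ s in (-π)..π, R (u s) := by
  subst hy
  set Y : ℝ → ℝ := fun τ : ℝ => -2 * Real.arcsin (Real.tanh τ) with hY
  set g : ℝ → ℝ := fun s => Te (u s) - R (u s) with hg
  have hderiv : ∀ τ, deriv Y τ = -2 / Real.cosh τ := fun τ => (hasDerivAt_Y τ).deriv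
  have hinj : Function.Injective Y := by
    have : StrictAnti Y := strictAnti_of_deriv_neg (fun τ => by
      rw [hderiv τ]
      exact div_neg_of_neg_of_pos (by norm_num) (Real.cosh_pos τ))
    exact this.injective
  -- change of variables
  have key : ∫ x in Set.Ioo (-π) π, g x = ∫ τ : ℝ, (2 / Real.cosh τ) * g (Y τ) := by
    have h := MeasureTheory.integral_image_eq_integral_abs_deriv_smul
      (MeasurableSet.univ) (f := Y) (f' := fun τ => -2 / Real.cosh τ)
      (fun x _ => (hasDerivAt_Y x).hasDerivWithinAt) (hinj.injOn) g
    rw [Set.image_univ, range_Y] at h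
    rw [h, MeasureTheory.Measure.restrict_univ]
    congr 1
    funext τ
    rw [abs_of_neg (div_neg_of_neg_of_pos (by norm_num) (Real.cosh_pos τ))]
    rw [smul_eq_mul]
    ring_nf
  -- rewrite the LHS integral
  have hlhs : (∫ τ : ℝ, deriv Y τ * ((Te (u (Y τ)) - R (u (Y τ))) / f))
      = -(1/f) * ∫ τ : ℝ, (2 / Real.cosh τ) * g (Y τ) := by
    rw [← MeasureTheory.integral_const_mul]
    congr 1
    funext τ
    rw [hderiv τ]
    show -2 / Real.cosh τ * ((Te (u (Y τ)) - R (u (Y τ))) / f)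
      = -(1/f) * (2 / Real.cosh τ * (Te (u (Y τ)) - R (u (Y τ))))
    ring
  -- integrability on [-π, π]
  have hπ : (-π : ℝ) ≤ π := by linarith [Real.pi_pos]
  have hTi : IntervalIntegrable (fun s => Te (u s)) volume (-π) π := by
    apply ContinuousOn.intervalIntegrable
    rw [Set.uIcc_of_le hπ]
    exact hTe.comp_continuousOn hu
  have hRi : IntervalIntegrable (fun s => R (u s)) volume (-π) π := by
    apply ContinuousOn.intervalIntegrable
    rw [Set.uIcc_of_le hπ]
    exact hR.comp_continuousOn hu
  have hIoo : ∫ x in Set.Ioo (-π) π, g x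
      = (∫ s in (-π)..π, Te (u s)) - ∫ s in (-π)..π, R (u s) := by
    rw [← intervalIntegral.integral_sub hTi hRi,
      intervalIntegral.integral_of_le hπ, MeasureTheory.integral_Ioc_eq_integral_Ioo]
  rw [hlhs, ← key, hIoo]
  have hfne : -(1/f) ≠ 0 := by
    simp only [ne_eq, neg_eq_zero, one_div, inv_eq_zero]
    exact hf.ne'
  rw [mul_eq_zero]
  constructor
  · rintro (h | h)
    · exact absurd h hfne
    · linarith [h]
  · intro h
    right
    linarith [h]
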